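/- Let (X, ≤) be a finite poset with the Alexandrov topology of increasing subsets, and let ℱ be a sheaf of abelian groups on X. Then ℱ is flabby if and only if for every x ∈ X the restriction map ℱ(X̄_x) → ℱ(X_x) is surjective, where X̄_x = {y : x ≤ y} and X_x = X̄_x ∖ {x}. -/

import Mathlib

open TopologicalSpace CategoryTheory

def upTop (X : Type*) [Preorder X] : TopologicalSpace X where
  IsOpen s := IsUpperSet s
  isOpen_univ := isUpperSet_univ
  isOpen_inter _ _ hs ht := hs.inter ht
  isOpen_sUnion _ h := isUpperSet_sUnion h

def PosetTop (X : Type u) [Preorder X] : TopCat.{u} :=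
  @TopCat.of X (upTop X)

def openIci {X : Type u} [Preorder X] (x : X) : Opens (PosetTop X) :=
  ⟨show Set X from Set.Ici x, isUpperSet_Ici x⟩

def openIoi {X : Type u} [Preorder X] (x : X) : Opens (PosetTop X) :=
  ⟨show Set X from Set.Ioi x, isUpperSet_Ioi x⟩

universe u

lemma res_res {Y : TopCat} (F : TopCat.Presheaf AddCommGrpCat.{u} Y) {A B C : Opens Y}
    (h1 : A ≤ B) (h2 : B ≤ C) (s : F.obj (Opposite.op C)) :
    F.map (homOfLE h1).op (F.map (homOfLE h2).op s)
      = F.map (homOfLE (h1.trans h2)).op s := by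
  rw [← CategoryTheory.comp_apply, ← F.map_comp]
  congr 1

/-- The morphism `ULift ℤ ⟶ A` classifying an element `a : A`. -/
def elemHom {A : AddCommGrpCat.{u}} (a : A) : AddCommGrpCat.of (ULift.{u} ℤ) ⟶ A :=
  AddCommGrpCat.ofHom
    { toFun := fun n => n.down • a
      map_zero' := by simp
      map_add' := fun m n => add_zsmul a m.down n.down }

lemma elemHom_one {A : AddCommGrpCat.{u}} (a : A) : elemHom a (ULift.up 1) = a := by
  show (1 : ℤ) • a = a
  exact one_zsmul a

/-- Glue two sections of a sheaf over two open sets that agree on the intersection. -/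
lemma glue_pair {Y : TopCat} (F : TopCat.Sheaf AddCommGrpCat.{u} Y) (U V : Opens Y)
    (s : F.val.obj (Opposite.op U)) (t : F.val.obj (Opposite.op V))
    (hst : F.val.map (homOfLE (inf_le_left : U ⊓ V ≤ U)).op s
         = F.val.map (homOfLE (inf_le_right : U ⊓ V ≤ V)).op t) :
    ∃ r : F.val.obj (Opposite.op (U ⊔ V)),
      F.val.map (homOfLE (le_sup_left : U ≤ U ⊔ V)).op r = s := by
  have L := TopCat.Sheaf.isLimitPullbackCone F U V
  have w : elemHom s ≫ F.val.map (homOfLE (inf_le_left : U ⊓ V ≤ U)).op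
      = elemHom t ≫ F.val.map (homOfLE (inf_le_right : U ⊓ V ≤ V)).op := by
    ext n
    rw [CategoryTheory.comp_apply, CategoryTheory.comp_apply]
    show F.val.map _ (n.down • s) = F.val.map _ (n.down • t)
    rw [map_zsmul, map_zsmul, hst]
  let l := Limits.PullbackCone.IsLimit.lift L (elemHom s) (elemHom t) w
  refine ⟨l (ULift.up 1), ?_⟩
  have hfst : l ≫ (TopCat.Sheaf.interUnionPullbackCone F U V).fst = elemHom s :=
    Limits.PullbackCone.IsLimit.lift_fst L (elemHom s) (elemHom t) w
  have h2 : F.val.map (homOfLE (le_sup_left : U ≤ U ⊔ V)).op (l (ULift.up 1))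
      = (l ≫ (TopCat.Sheaf.interUnionPullbackCone F U V).fst) (ULift.up 1) := by
    rw [CategoryTheory.comp_apply]
    rfl
  rw [h2, hfst, elemHom_one]

lemma key (X : Type) [PartialOrder X] [Finite X]
    (F : TopCat.Sheaf AddCommGrpCat.{u} (PosetTop X))
    (hyp : ∀ x : X, Function.Surjective
        (F.val.map (homOfLE (show openIoi x ≤ openIci x from fun y hy => le_of_lt hy)).op)) :
    ∀ n : ℕ, ∀ (U V : Opens (PosetTop X)) (h : U ≤ V),
      ((V : Opens (PosetTop X)).1 \ (U : Opens (PosetTop X)).1).ncard ≤ n →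
      Function.Surjective (F.val.map (homOfLE h).op) := by
  haveI : Finite ((PosetTop X) : Type) := ‹Finite X›
  intro n
  induction n with
  | zero =>
    intro U V h hcard
    have hVU : U = V := by
      apply le_antisymm h
      intro y hy
      by_contra hyU
      have hmem : y ∈ (V.1 \ U.1 : Set _) := ⟨hy, hyU⟩
      have he : ((V : Opens (PosetTop X)).1 \ (U : Opens (PosetTop X)).1).ncard = 0 :=
        Nat.le_zero.mp hcard
      rw [Set.ncard_eq_zero (Set.toFinite _)] at he
      exact (Set.eq_empty_iff_forall_notMem.mp he y) hmem
    subst hVU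
    intro s
    exact ⟨s, by rw [Subsingleton.elim (homOfLE h) (𝟙 U)]; simp⟩
  | succ n ih =>
    intro U V h hcard
    by_cases hVU : V ≤ U
    · exact ih U V h (by
        have he : (V : Opens (PosetTop X)).1 \ (U : Opens (PosetTop X)).1 = ∅ :=
          Set.diff_eq_empty.mpr (SetLike.coe_subset_coe.mpr hVU)
        rw [he]
        simp)
    · have hne : ((V : Opens (PosetTop X)).1 \ (U : Opens (PosetTop X)).1).Nonempty := by
        rw [Set.nonempty_iff_ne_empty]
        intro he
        exact hVU (Set.diff_eq_empty.mp he)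
      obtain ⟨x, hx, hxmax⟩ :=
        Set.Finite.exists_maximalFor (fun y => show X from y) _ (Set.toFinite _) hne
      have hxV : x ∈ V := hx.1
      have hxU : x ∉ U := hx.2
      have hIciV : openIci x ≤ V := fun y hy => V.2 hy hxV
      have hIoiIci : openIoi x ≤ openIci x := fun y hy => le_of_lt hy
      have hIoiU : openIoi x ≤ U := by
        intro y hy
        by_contra hyU
        have hyV : y ∈ V := V.2 (le_of_lt hy) hxV
        have := hxmax ⟨hyV, hyU⟩ (le_of_lt hy)
        exact absurd this (not_le_of_gt hy)
      set U' : Opens (PosetTop X) := U ⊔ openIci x with hU'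
      have hUU' : U ≤ U' := le_sup_left
      have hIciU' : openIci x ≤ U' := le_sup_right
      have hU'V : U' ≤ V := sup_le h hIciV
      have hcard' : ((V : Opens (PosetTop X)).1 \ U'.1).ncard ≤ n := by
        have hsub : (V : Opens (PosetTop X)).1 \ U'.1
            ⊆ ((V : Opens (PosetTop X)).1 \ (U : Opens (PosetTop X)).1) \ {x} := by
          intro y hy
          refine ⟨⟨hy.1, fun hyU => hy.2 (Or.inl hyU)⟩, ?_⟩
          intro he
          exact hy.2 (Or.inr (le_of_eq he.symm))
        have h1 := Set.ncard_le_ncard hsub (Set.toFinite _)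
        have h2 : (((V : Opens (PosetTop X)).1 \ (U : Opens (PosetTop X)).1) \ {x}).ncard
            < ((V : Opens (PosetTop X)).1 \ (U : Opens (PosetTop X)).1).ncard :=
          Set.ncard_diff_singleton_lt_of_mem hx (Set.toFinite _)
        omega
      intro s
      obtain ⟨t0, ht0⟩ := hyp x (F.val.map (homOfLE hIoiU).op s)
      have hinf : U ⊓ openIci x ≤ openIoi x := by
        rintro y ⟨hyU, hyx⟩
        exact lt_of_le_of_ne hyx (by rintro rfl; exact hxU hyU)
      have hcompat : F.val.map (homOfLE (inf_le_left : U ⊓ openIci x ≤ U)).op s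
          = F.val.map (homOfLE (inf_le_right : U ⊓ openIci x ≤ openIci x)).op t0 := by
        rw [Subsingleton.elim
            (homOfLE (inf_le_left : U ⊓ openIci x ≤ U))
            (homOfLE hinf ≫ homOfLE hIoiU),
          Subsingleton.elim
            (homOfLE (inf_le_right : U ⊓ openIci x ≤ openIci x))
            (homOfLE hinf ≫ homOfLE hIoiIci)]
        rw [op_comp, op_comp, F.val.map_comp, F.val.map_comp,
          CategoryTheory.comp_apply, CategoryTheory.comp_apply, ht0]
      obtain ⟨s', hs'⟩ := glue_pair F U (openIci x) s t0 hcompat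
      obtain ⟨s'', hs''⟩ := ih U' V hU'V hcard' s'
      refine ⟨s'', ?_⟩
      have heq : F.val.map (homOfLE h).op s''
          = F.val.map (homOfLE hUU').op (F.val.map (homOfLE hU'V).op s'') := by
        rw [res_res]
      rw [heq, hs'']
      exact hs'

theorem stmt4 (X : Type) [PartialOrder X] [Finite X]
    (F : TopCat.Sheaf AddCommGrpCat (PosetTop X)) :
    (∀ (U V : Opens (PosetTop X)) (h : U ≤ V),
        Function.Surjective (F.val.map (homOfLE h).op)) ↔
    (∀ x : X, Function.Surjective
        (F.val.map (homOfLE (show openIoi x ≤ openIci x from fun y hy => le_of_lt hy)).op)) := by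
  constructor
  · intro hF x
    exact hF _ _ _
  · intro hyp U V h
    exact key X F hyp (((V : Opens (PosetTop X)).1 \ (U : Opens (PosetTop X)).1).ncard) U V h le_rfl
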